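/- Theorem 1. Let μ ∈ ℝ, σ > 0 and Λ > 0. Let γ = gaussianReal μ σ² and let ν be the exponentially tilted measure of γ with rate Λ, i.e., the probability measure with density x ↦ e^{−Λ·x} / (∫ e^{−Λ·y} dγ(y)) with respect to γ. Then the expected squared error under uniform sampling is E_U = ∫ (x − μ)² dγ(x) = σ², the expected squared error under exponential sampling is E_P = ∫ (x − μ)² dν(x) = σ² + Λ²·σ⁴, and hence E_U < E_P. -/

import Mathlib

open MeasureTheory ProbabilityTheory
open scoped NNReal ENNReal
open Real

lemma my_integral_sq_mul_exp_neg_mul_sq {b : ℝ} (hb : 0 < b) :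
    ∫ x : ℝ, x ^ 2 * Real.exp (-b * x ^ 2) = Real.sqrt (π / b) / (2 * b) := by
  have h1 : ∫ x : ℝ, x ^ 2 * Real.exp (-b * x ^ 2)
      = 2 * ∫ x in Set.Ioi (0:ℝ), x ^ 2 * Real.exp (-b * x ^ 2) := by
    rw [← integral_comp_abs (f := fun x => x ^ 2 * Real.exp (-b * x ^ 2))]
    congr 1; ext x; rw [sq_abs]
  have h2 : ∫ x in Set.Ioi (0:ℝ), x ^ 2 * Real.exp (-b * x ^ 2)
      = b ^ (-((2:ℝ) + 1) / 2) * (1 / 2) * Real.Gamma (((2:ℝ) + 1) / 2) := by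
    rw [← integral_rpow_mul_exp_neg_mul_rpow (two_pos) (by norm_num) hb]
    refine setIntegral_congr_fun measurableSet_Ioi fun x hx => ?_
    norm_num [show ((2:ℝ)) = ((2:ℕ):ℝ) by norm_num, Real.rpow_natCast]
  have hG : Real.Gamma (((2:ℝ) + 1) / 2) = (1/2) * Real.sqrt π := by
    have h : ((2:ℝ) + 1) / 2 = 1/2 + 1 := by norm_num
    rw [h, Real.Gamma_add_one (by norm_num), Real.Gamma_one_half_eq]
  have hsb : Real.sqrt b ≠ 0 := by positivity
  have hrw : b ^ (-((2:ℝ) + 1) / 2) = (b * Real.sqrt b)⁻¹ := by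
    rw [show (-((2:ℝ) + 1) / 2) = -(1 + 1/2) by norm_num, Real.rpow_neg hb.le,
      Real.rpow_add hb, Real.rpow_one, ← Real.sqrt_eq_rpow]
  rw [h1, h2, hG, hrw, Real.sqrt_div pi_nonneg b]
  have hbb : Real.sqrt b * Real.sqrt b = b := Real.mul_self_sqrt hb.le
  field_simp

lemma my_integral_gaussianReal (m : ℝ) {v : ℝ≥0} (hv : v ≠ 0) (g : ℝ → ℝ) :
    ∫ x, g x ∂gaussianReal m v = ∫ x, gaussianPDFReal m v x * g x := by
  rw [gaussianReal_of_var_ne_zero m hv]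
  have h : (volume : Measure ℝ).withDensity (gaussianPDF m v)
      = (volume : Measure ℝ).withDensity
        (fun x => ((Real.toNNReal (gaussianPDFReal m v x) : ℝ≥0) : ℝ≥0∞)) := rfl
  rw [h, integral_withDensity_eq_integral_smul
    ((measurable_gaussianPDFReal m v).real_toNNReal) g]
  congr 1; ext x
  simp [NNReal.smul_def, Real.coe_toNNReal _ (gaussianPDFReal_nonneg m v x)]

lemma my_tilt_pdf (μ Λ x : ℝ) {v : ℝ≥0} (hv : v ≠ 0) :
    gaussianPDFReal μ v x * Real.exp (-Λ * x)
      = Real.exp (-Λ * μ + Λ^2 * (v:ℝ) / 2) * gaussianPDFReal (μ - Λ * (v:ℝ)) v x := by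
  have hv' : (v:ℝ) ≠ 0 := by exact_mod_cast hv
  simp only [gaussianPDFReal]
  have hexp : -(x - μ)^2 / (2*(v:ℝ)) + (-Λ * x)
      = (-Λ * μ + Λ^2 * (v:ℝ) / 2) + (-(x - (μ - Λ * (v:ℝ)))^2 / (2*(v:ℝ))) := by
    field_simp
    ring
  rw [mul_assoc, ← Real.exp_add, hexp, Real.exp_add]
  ring

lemma my_gaussian_mgf (μ Λ : ℝ) {v : ℝ≥0} (hv : v ≠ 0) :
    ∫ y, Real.exp (-Λ * y) ∂gaussianReal μ v = Real.exp (-Λ * μ + Λ^2 * (v:ℝ) / 2) := by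
  rw [my_integral_gaussianReal μ hv]
  calc ∫ x, gaussianPDFReal μ v x * Real.exp (-Λ * x)
      = ∫ x, Real.exp (-Λ * μ + Λ^2 * (v:ℝ) / 2) * gaussianPDFReal (μ - Λ * (v:ℝ)) v x := by
        congr 1; ext x; exact my_tilt_pdf μ Λ x hv
    _ = Real.exp (-Λ * μ + Λ^2 * (v:ℝ) / 2) := by
        rw [integral_const_mul, integral_gaussianPDFReal_eq_one _ hv, mul_one]

lemma my_tilted_gaussian (μ Λ : ℝ) {v : ℝ≥0} (hv : v ≠ 0) :
    (gaussianReal μ v).withDensity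
        (fun x => ENNReal.ofReal (Real.exp (-Λ * x) / ∫ y, Real.exp (-Λ * y) ∂(gaussianReal μ v)))
      = gaussianReal (μ - Λ * (v:ℝ)) v := by
  rw [my_gaussian_mgf μ Λ hv]
  have hmeas : Measurable fun x : ℝ => ENNReal.ofReal
      (Real.exp (-Λ * x) / Real.exp (-Λ * μ + Λ^2 * (v:ℝ) / 2)) := by
    apply Measurable.ennreal_ofReal
    exact (Real.measurable_exp.comp (measurable_id.const_mul _)).div_const _
  rw [gaussianReal_of_var_ne_zero μ hv, gaussianReal_of_var_ne_zero _ hv,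
    ← withDensity_mul _ (measurable_gaussianPDF μ v) hmeas]
  congr 1
  ext x
  simp only [Pi.mul_apply, gaussianPDF, ← ENNReal.ofReal_mul (gaussianPDFReal_nonneg μ v x)]
  congr 1
  rw [div_eq_mul_inv, ← mul_assoc, my_tilt_pdf μ Λ x hv,
    mul_comm (Real.exp _), mul_assoc, mul_inv_cancel₀ (Real.exp_ne_zero _), mul_one]

lemma my_gaussian_moment (m c : ℝ) {v : ℝ≥0} (hv : v ≠ 0) :
    ∫ x, (x - c) ^ 2 ∂gaussianReal m v = (v:ℝ) + (m - c)^2 := by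
  have hV : 0 < (v:ℝ) := NNReal.coe_pos.mpr (pos_iff_ne_zero.mpr hv)
  set b : ℝ := (2 * (v:ℝ))⁻¹ with hbdef
  have hb : 0 < b := by positivity
  set K : ℝ := (Real.sqrt (2 * π * (v:ℝ)))⁻¹ with hKdef
  have hI1 : Integrable (fun x : ℝ => x ^ 2 * Real.exp (-b * x ^ 2)) := by
    have h := integrable_rpow_mul_exp_neg_mul_sq hb (s := 2) (by norm_num)
    refine h.congr (Filter.Eventually.of_forall fun x => ?_)
    norm_num [show ((2:ℝ)) = ((2:ℕ):ℝ) by norm_num, Real.rpow_natCast]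
  have hI2 : Integrable (fun x : ℝ => x * Real.exp (-b * x ^ 2)) :=
    integrable_mul_exp_neg_mul_sq hb
  have hI3 : Integrable (fun x : ℝ => Real.exp (-b * x ^ 2)) :=
    integrable_exp_neg_mul_sq hb
  have hodd : ∫ x : ℝ, x * Real.exp (-b * x ^ 2) = 0 := by
    have h := integral_neg_eq_self (fun x : ℝ => x * Real.exp (-b * x ^ 2)) volume
    simp only [neg_sq, neg_mul, integral_neg] at h
    have h' : ∫ x : ℝ, x * Real.exp (-b * x ^ 2) = ∫ x : ℝ, x * Real.exp (-(b * x ^ 2)) := by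
      simp only [neg_mul]
    rw [h']
    linarith [h]
  rw [my_integral_gaussianReal m hv,
    ← integral_add_right_eq_self (fun x => gaussianPDFReal m v x * (x - c) ^ 2) m]
  have hexp : ∀ x : ℝ, gaussianPDFReal m v (x + m) * (x + m - c) ^ 2
      = K * (x ^ 2 * Real.exp (-b * x ^ 2)) + (2*(m-c)*K) * (x * Real.exp (-b * x ^ 2))
        + ((m-c)^2*K) * Real.exp (-b * x ^ 2) := by
    intro x
    simp only [gaussianPDFReal, hKdef]
    rw [show -((x + m) - m) ^ 2 / (2 * (v:ℝ)) = -b * x ^ 2 by rw [hbdef]; field_simp; ring]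
    ring
  simp_rw [hexp]
  have hI12 : Integrable (fun x : ℝ => K * (x ^ 2 * Real.exp (-b * x ^ 2))
      + (2*(m-c)*K) * (x * Real.exp (-b * x ^ 2))) :=
    (hI1.const_mul K).add (hI2.const_mul (2*(m-c)*K))
  rw [integral_add hI12 (hI3.const_mul ((m-c)^2*K)),
    integral_add (hI1.const_mul K) (hI2.const_mul (2*(m-c)*K)),
    integral_const_mul, integral_const_mul, integral_const_mul,
    my_integral_sq_mul_exp_neg_mul_sq hb, hodd, integral_gaussian]
  have hpb : π / b = 2 * π * (v:ℝ) := by rw [hbdef]; field_simp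
  have h2b : (2 * b)⁻¹ = (v:ℝ) := by rw [hbdef]; field_simp
  have hK1 : K * Real.sqrt (2 * π * (v:ℝ)) = 1 := inv_mul_cancel₀ (by positivity)
  rw [hpb, mul_zero, add_zero]
  have e1 : K * (Real.sqrt (2 * π * (v:ℝ)) / (2 * b)) = (v:ℝ) := by
    rw [div_eq_mul_inv, h2b, ← mul_assoc, hK1, one_mul]
  have e2 : (m - c) ^ 2 * K * Real.sqrt (2 * π * (v:ℝ)) = (m - c) ^ 2 := by
    rw [mul_assoc, hK1, mul_one]
  linarith [e1, e2]

/-- Theorem 1 of the paper. If losses are Gaussian `γ = gaussianReal μ σ²`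
and `ν` is the exponential tilting of `γ` with rate `Λ > 0` (density
`x ↦ e^{−Λx}/∫ e^{−Λy} dγ(y)` w.r.t. `γ`), then the expected squared error
under uniform sampling is `E_U = ∫ (x − μ)² dγ = σ²`, under exponential
sampling it is `E_P = ∫ (x − μ)² dν = σ² + Λ²σ⁴`, and `E_U < E_P`. -/
theorem expected_error_uniform_lt_exponential_gaussian
    (μ : ℝ) (σ : ℝ≥0) (hσ : 0 < σ) (Λ : ℝ) (hΛ : 0 < Λ) :
    (∫ x, (x - μ) ^ 2 ∂(gaussianReal μ (σ ^ 2)) = (σ : ℝ) ^ 2) ∧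
    (∫ x, (x - μ) ^ 2 ∂((gaussianReal μ (σ ^ 2)).withDensity
        (fun x => ENNReal.ofReal (Real.exp (-Λ * x) /
          ∫ y, Real.exp (-Λ * y) ∂(gaussianReal μ (σ ^ 2)))))
      = (σ : ℝ) ^ 2 + Λ ^ 2 * (σ : ℝ) ^ 4) ∧
    (∫ x, (x - μ) ^ 2 ∂(gaussianReal μ (σ ^ 2))) <
      ∫ x, (x - μ) ^ 2 ∂((gaussianReal μ (σ ^ 2)).withDensity
        (fun x => ENNReal.ofReal (Real.exp (-Λ * x) /
          ∫ y, Real.exp (-Λ * y) ∂(gaussianReal μ (σ ^ 2))))) := by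
  have hv : (σ ^ 2 : ℝ≥0) ≠ 0 := pow_ne_zero 2 hσ.ne'
  have hcast : ((σ ^ 2 : ℝ≥0) : ℝ) = (σ : ℝ) ^ 2 := by push_cast; ring
  have hEU : ∫ x, (x - μ) ^ 2 ∂(gaussianReal μ (σ ^ 2)) = (σ : ℝ) ^ 2 := by
    rw [my_gaussian_moment μ μ hv, hcast]; ring
  have hEP : ∫ x, (x - μ) ^ 2 ∂((gaussianReal μ (σ ^ 2)).withDensity
        (fun x => ENNReal.ofReal (Real.exp (-Λ * x) /
          ∫ y, Real.exp (-Λ * y) ∂(gaussianReal μ (σ ^ 2)))))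
      = (σ : ℝ) ^ 2 + Λ ^ 2 * (σ : ℝ) ^ 4 := by
    rw [my_tilted_gaussian μ Λ hv, my_gaussian_moment _ μ hv, hcast]; ring
  refine ⟨hEU, hEP, ?_⟩
  rw [hEU, hEP]
  have hpos : 0 < Λ ^ 2 * (σ : ℝ) ^ 4 := by positivity
  linarith
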